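/- Suppose τ : ℤ^D → 𝕋 is an injective group homomorphism with dense image. Let 𝒫 and 𝒬 be 𝒜-labelled open partitions of 𝕋 and let t ∈ 𝕋̃(𝒫) ∩ 𝕋̃(𝒬). Then the Cesàro density of the disagreement set {ℓ ∈ ℤ^D : 𝒫_σ(t)_ℓ ≠ 𝒬_σ(t)_ℓ} exists (the limit over boxes 𝔹(N) exists), and d_△(𝒫,𝒬) = 2 · d_B(𝒫_σ(t), 𝒬_σ(t)). In particular the map sending an open partition 𝒫 with 0 ∈ 𝕋̃(𝒫) to 𝒫_σ(0) is a distance-halving isometry from d_△ to d_B. -/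

import Mathlib

open MeasureTheory Filter Topology
open scoped ENNReal

noncomputable section

/-- The `K`-dimensional torus `𝕋 = (ℝ/ℤ)^K`, with its (sup) quotient metric `d`
and Haar (Lebesgue) probability measure `volume`. -/
abbrev Torus (K : ℕ) := Fin K → AddCircle (1 : ℝ)

/-- The lattice `𝕃 = ℤ^D`. -/
abbrev Zd (D : ℕ) := Fin D → ℤ

/-- The box `𝔹(N) = {-N,…,N-1}^D ⊆ ℤ^D`. -/
def box (D N : ℕ) : Finset (Zd D) :=
  Fintype.piFinset fun _ => Finset.Ico (-(N : ℤ)) (N : ℤ)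

open Classical in
/-- `#(J ∩ 𝔹(N)) / (2N)^D`. -/
def densSeq (D : ℕ) (J : Set (Zd D)) (N : ℕ) : ℝ :=
  ((box D N).filter (fun ℓ => ℓ ∈ J)).card / ((2 * N : ℕ) : ℝ) ^ D

/-- The upper Cesàro density `d̄(J)` of `J ⊆ ℤ^D`. -/
def upperDens (D : ℕ) (J : Set (Zd D)) : ℝ :=
  Filter.limsup (densSeq D J) Filter.atTop

/-- The Besicovitch pseudometric `d_B` on `𝒜^{ℤ^D}`. -/
def dB {A : Type*} (D : ℕ) (p q : Zd D → A) : ℝ :=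
  upperDens D {ℓ | p ℓ ≠ q ℓ}

variable {K D : ℕ} {A : Type*}

/-- An `𝒜`-labelled measurable partition of the torus: pairwise disjoint measurable
cells whose union has full measure. -/
structure IsMeasPartition (P : A → Set (Torus K)) : Prop where
  meas : ∀ a, MeasurableSet (P a)
  disj : Pairwise (Function.onFun Disjoint P)
  full : volume (⋃ a, P a) = 1

/-- An `𝒜`-labelled open partition of the torus: pairwise disjoint open cells whose
union is dense and has full measure. -/
structure IsOpenPartition (P : A → Set (Torus K)) : Prop where
  isOpen : ∀ a, IsOpen (P a)
  disj : Pairwise (Function.onFun Disjoint P)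
  dense : Dense (⋃ a, P a)
  full : volume (⋃ a, P a) = 1

/-- `lab` realizes the partition `P` as an `𝒜`-valued function (each cell is labelled
by its index). -/
def IsLabel (P : A → Set (Torus K)) (lab : Torus K → A) : Prop :=
  ∀ a, ∀ t ∈ P a, lab t = a

/-- The symmetric-difference pseudometric `d_△(𝒫,𝒬) = Σ_a λ(P_a △ Q_a)`. -/
def dSym [Fintype A] (P Q : A → Set (Torus K)) : ℝ :=
  ∑ a, (volume (symmDiff (P a) (Q a))).toReal

/-- `𝕋̃(𝒫) = ⋂_ℓ σ^ℓ(P_*)`, where `σ^ℓ(t) = t + τ(ℓ)` and `P_* = ⋃_a P_a`. -/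
def Ttil (τ : Zd D →+ Torus K) (P : A → Set (Torus K)) : Set (Torus K) :=
  ⋂ ℓ : Zd D, (fun x => x + τ ℓ) '' (⋃ a, P a)

/-- The trajectory map `𝒫_σ(t)_ℓ = 𝒫(σ^ℓ t)`, expressed via a labelling `lab` of `𝒫`. -/
def traj (τ : Zd D →+ Torus K) (lab : Torus K → A) (t : Torus K) : Zd D → A :=
  fun ℓ => lab (t + τ ℓ)

/-- A partition is simple if `0` is its only translational symmetry. -/
def IsSimple (P : A → Set (Torus K)) : Prop :=
  ∀ s : Torus K, (∀ a, volume (symmDiff (P a) ((fun x => x + s) '' P a)) = 0) → s = 0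

/-- The cellular automaton `Φ` with neighbourhood `B` and local rule `φ`:
`Φ(x)_ℓ = φ((x_{ℓ+b})_{b∈B})`. -/
def caMap {D : ℕ} {A : Type*} (B : Finset (Zd D)) (φ : (B → A) → A)
    (x : Zd D → A) : Zd D → A :=
  fun ℓ => φ fun b => x (ℓ + (b : Zd D))

/-- The induced map `Φ̂` on partitions: `Q_a = ⋃_{c : φ(c)=a} ⋂_{b∈B} σ^{-b}(P_{c_b})`. -/
def inducedPart (τ : Zd D →+ Torus K) (B : Finset (Zd D)) (φ : (B → A) → A)
    (P : A → Set (Torus K)) : A → Set (Torus K) :=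
  fun a => ⋃ (c : B → A) (_ : φ c = a), ⋂ b : B, {t | t + τ (b : Zd D) ∈ P (c b)}

/-- `x ∈ QS_σ`: `x` is a `σ`-quasisturmian sequence, i.e. the `𝒫`-trajectory of some
point of `𝕋̃(𝒫)` for some open partition `𝒫`. -/
def IsQSSeq (τ : Zd D →+ Torus K) (x : Zd D → A) : Prop :=
  ∃ (P : A → Set (Torus K)) (lab : Torus K → A) (t : Torus K),
    IsOpenPartition P ∧ IsLabel P lab ∧ t ∈ Ttil τ P ∧ x = traj τ lab t

/-- If `t ∈ 𝕋̃(𝒫) ∩ 𝕋̃(𝒬)` then the Cesàro density of the disagreement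
set of the two trajectories exists, and `d_△(𝒫,𝒬) = 2·d_B(𝒫_σ(t), 𝒬_σ(t))`. -/
instance : IsProbabilityMeasure (volume : Measure (AddCircle (1:ℝ))) :=
  ⟨by rw [AddCircle.measure_univ]; simp⟩

variable {K D : ℕ}

/-- The character of the torus indexed by `m : ℤ^K`. -/
def tchar (m : Fin K → ℤ) : AddChar (Torus K) ℂ where
  toFun x := ∏ j, fourier (m j) (x j)
  map_zero_eq_one' := by simp [fourier_apply, Pi.zero_apply]
  map_add_eq_mul' x y := by
    rw [← Finset.prod_mul_distrib]
    refine Finset.prod_congr rfl fun j _ => ?_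
    simp only [Pi.add_apply, fourier_apply, smul_add, AddCircle.toCircle_add, Circle.coe_mul]

lemma tchar_continuous (m : Fin K → ℤ) : Continuous (tchar m) := by
  show Continuous (fun x : Torus K => ∏ j, fourier (m j) (x j))
  refine continuous_finset_prod _ fun j _ => ?_
  exact (fourier (m j)).continuous.comp (continuous_apply j)

lemma norm_tchar (m : Fin K → ℤ) (x : Torus K) : ‖tchar m x‖ = 1 := by
  show ‖∏ j, fourier (m j) (x j)‖ = 1
  rw [norm_prod]
  refine Finset.prod_eq_one fun j _ => ?_
  rw [fourier_apply]; exact Circle.norm_coe _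

lemma tchar_mul (m m' : Fin K → ℤ) (x : Torus K) :
    tchar m x * tchar m' x = tchar (m + m') x := by
  show (∏ j, fourier (m j) (x j)) * (∏ j, fourier (m' j) (x j)) = _
  rw [← Finset.prod_mul_distrib]
  exact Finset.prod_congr rfl fun j _ => (fourier_add).symm

lemma tchar_conj (m : Fin K → ℤ) (x : Torus K) :
    (starRingEnd ℂ) (tchar m x) = tchar (-m) x := by
  show (starRingEnd ℂ) (∏ j, fourier (m j) (x j)) = ∏ j, fourier ((-m) j) (x j)
  rw [map_prod]
  exact Finset.prod_congr rfl fun j _ => by rw [Pi.neg_apply, fourier_neg]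

lemma tchar_ne_one (m : Fin K → ℤ) (hm : m ≠ 0) : ∃ x : Torus K, tchar m x ≠ 1 := by
  obtain ⟨j, hj⟩ : ∃ j, m j ≠ 0 := by
    by_contra h; push_neg at h; exact hm (funext h)
  refine ⟨Pi.single j ((((2 * m j : ℤ) : ℝ)⁻¹ : ℝ) : AddCircle (1:ℝ)), ?_⟩
  have : tchar m (Pi.single j ((((2 * m j : ℤ) : ℝ)⁻¹ : ℝ) : AddCircle (1:ℝ))) = -1 := by
    show (∏ i, fourier (m i) _) = -1
    rw [Finset.prod_eq_single j]
    · rw [Pi.single_eq_same, fourier_coe_apply]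
      have h2 : ((2 * m j : ℤ) : ℝ) ≠ 0 := by exact_mod_cast mul_ne_zero two_ne_zero hj
      have : 2 * (Real.pi : ℂ) * Complex.I * (m j : ℂ) * (((2 * m j : ℤ) : ℝ)⁻¹ : ℝ) / ((1:ℝ):ℂ)
          = Real.pi * Complex.I := by
        push_cast
        have hmj : ((m j : ℂ)) ≠ 0 := by exact_mod_cast hj
        field_simp
      rw [this, Complex.exp_pi_mul_I]
    · intro i _ hij
      rw [Pi.single_eq_of_ne hij, fourier_apply, smul_zero]
      simp
    · intro h; exact absurd (Finset.mem_univ j) h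
  rw [this]; intro h; norm_num at h

lemma tchar_map_sum {ι : Type*} (m : Fin K → ℤ) (s : Finset ι) (f : ι → Torus K) :
    tchar m (∑ i ∈ s, f i) = ∏ i ∈ s, tchar m (f i) := by
  classical
  induction s using Finset.induction with
  | empty => simp
  | insert _ _ h ih => rw [Finset.sum_insert h, Finset.prod_insert h, AddChar.map_add_eq_mul, ih]

lemma integral_tchar (m : Fin K → ℤ) (hm : m ≠ 0) : ∫ x : Torus K, tchar m x = 0 := by
  obtain ⟨s, hs⟩ := tchar_ne_one m hm
  have h1 : ∫ x : Torus K, tchar m (x + s) = ∫ x : Torus K, tchar m x :=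
    integral_add_right_eq_self _ s
  have h2 : ∫ x : Torus K, tchar m (x + s) = (∫ x : Torus K, tchar m x) * tchar m s := by
    rw [← integral_mul_const]
    exact integral_congr_ae (Filter.Eventually.of_forall fun x => AddChar.map_add_eq_mul _ _ _)
  have := h1.symm.trans h2
  have h3 : (∫ x : Torus K, tchar m x) * (tchar m s - 1) = 0 := by linear_combination -this
  rcases mul_eq_zero.1 h3 with h | h
  · exact h
  · exact absurd (by linear_combination h) hs


lemma card_Ico_NN (N : ℕ) : (Finset.Ico (-(N:ℤ)) (N:ℤ)).card = 2 * N := by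
  rw [Int.card_Ico]; omega

lemma card_box (D N : ℕ) : (box D N).card = (2 * N) ^ D := by
  rw [box, Fintype.card_piFinset]
  simp only [card_Ico_NN, Finset.prod_const, Finset.card_univ, Fintype.card_fin]

lemma sum_zpow_Ico (z : ℂ) (hz : z ≠ 0) (N : ℕ) :
    ∑ k ∈ Finset.Ico (-(N:ℤ)) (N:ℤ), z ^ k
      = z ^ (-(N:ℤ)) * ∑ i ∈ Finset.range (2 * N), z ^ i := by
  rw [Finset.mul_sum]
  refine Finset.sum_nbij' (fun k => (k + N).toNat) (fun i => (i : ℤ) - N) ?_ ?_ ?_ ?_ ?_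
  · intro k hk; rw [Finset.mem_Ico] at hk; rw [Finset.mem_range]; omega
  · intro i hi; rw [Finset.mem_range] at hi; rw [Finset.mem_Ico]; omega
  · intro k hk; rw [Finset.mem_Ico] at hk; omega
  · intro i hi; rw [Finset.mem_range] at hi; omega
  · intro k hk
    rw [Finset.mem_Ico] at hk
    rw [← zpow_natCast z, ← zpow_add₀ hz]
    congr 1
    omega

lemma norm_geom_bound (z : ℂ) (hn : ‖z‖ = 1) (hz : z ≠ 1) (N : ℕ) :
    ‖∑ k ∈ Finset.Ico (-(N:ℤ)) (N:ℤ), z ^ k‖ ≤ 2 / ‖z - 1‖ := by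
  have hz0 : z ≠ 0 := by intro h; rw [h] at hn; simp at hn
  rw [sum_zpow_Ico z hz0 N, geom_sum_eq hz, norm_mul, norm_zpow, hn, one_zpow, one_mul,
    norm_div]
  gcongr
  calc ‖z ^ (2*N) - 1‖ ≤ ‖z ^ (2*N)‖ + ‖(1:ℂ)‖ := norm_sub_le _ _
  _ ≤ 2 := by rw [norm_pow, hn, one_pow, norm_one]; norm_num

/-- Birkhoff average along boxes (complex valued). -/
def birkC (τ : Zd D →+ Torus K) (f : Torus K → ℂ) (t : Torus K) (N : ℕ) : ℂ :=
  (∑ ℓ ∈ box D N, f (t + τ ℓ)) / (((2 * N : ℕ) : ℂ)) ^ D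

lemma tchar_tau_decomp (τ : Zd D →+ Torus K) (m : Fin K → ℤ) (ℓ : Zd D) :
    tchar m (τ ℓ) = ∏ j, (tchar m (τ (Pi.single j 1))) ^ (ℓ j) := by
  have hℓ : ℓ = ∑ j, (ℓ j) • Pi.single j (1:ℤ) := by
    ext i
    rw [Finset.sum_apply]
    rw [Finset.sum_eq_single i]
    · simp
    · intro j _ hji; simp [Pi.single_eq_of_ne' hji]
    · intro h; exact absurd (Finset.mem_univ i) h
  conv_lhs => rw [hℓ, map_sum, tchar_map_sum]
  refine Finset.prod_congr rfl fun j _ => ?_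
  rw [map_zsmul, AddChar.map_zsmul_eq_zpow]

lemma tendsto_birkC_tchar (τ : Zd D →+ Torus K) (hdense : DenseRange τ) (hD : 1 ≤ D)
    (m : Fin K → ℤ) (hm : m ≠ 0) (t : Torus K) :
    Tendsto (birkC τ (tchar m) t) atTop (𝓝 0) := by
  -- nontriviality on the range of τ
  have hne : ∃ ℓ0 : Zd D, tchar m (τ ℓ0) ≠ 1 := by
    by_contra h
    push_neg at h
    obtain ⟨x, hx⟩ := tchar_ne_one m hm
    have hsub : Set.range τ ⊆ {y : Torus K | tchar m y = 1} := by
      rintro _ ⟨ℓ, rfl⟩; exact h ℓ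
    have hcl : closure (Set.range (τ : Zd D → Torus K)) ⊆ {y : Torus K | tchar m y = 1} :=
      (isClosed_eq (tchar_continuous m) continuous_const).closure_subset_iff.mpr hsub
    exact hx (hcl (by rw [hdense.closure_range]; trivial))
  obtain ⟨ℓ0, hℓ0⟩ := hne
  set z : Fin D → ℂ := fun j => tchar m (τ (Pi.single j 1)) with hz
  have hznorm : ∀ j, ‖z j‖ = 1 := fun j => norm_tchar _ _
  have hzne : ∃ j0, z j0 ≠ 1 := by
    by_contra h
    push_neg at h
    apply hℓ0
    rw [tchar_tau_decomp τ m ℓ0]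
    refine Finset.prod_eq_one fun j _ => ?_
    have hj : (tchar m) (τ (Pi.single j 1)) = 1 := h j
    rw [hj, one_zpow]
  obtain ⟨j0, hj0⟩ := hzne
  set C : ℝ := 2 / ‖z j0 - 1‖ with hC
  have hC0 : 0 ≤ C := by positivity
  -- rewrite the Birkhoff sum
  have key : ∀ N : ℕ, birkC τ (tchar m) t N
      = tchar m t * (∏ j, ∑ k ∈ Finset.Ico (-(N:ℤ)) (N:ℤ), (z j) ^ k) / (((2*N:ℕ):ℂ)) ^ D := by
    intro N
    rw [birkC, Finset.prod_univ_sum]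
    congr 1
    rw [Finset.mul_sum]
    refine Finset.sum_congr rfl fun ℓ _ => ?_
    rw [AddChar.map_add_eq_mul, tchar_tau_decomp τ m ℓ]
  -- norm bound
  have hbound : ∀ N : ℕ, 1 ≤ N → ‖birkC τ (tchar m) t N‖ ≤ C / ((2*N:ℕ):ℝ) := by
    intro N hN
    rw [key N, norm_div, norm_mul, norm_tchar, one_mul, norm_pow, Complex.norm_natCast]
    have h2N : (0:ℝ) < ((2*N:ℕ):ℝ) := by positivity
    have hprod : ‖∏ j, ∑ k ∈ Finset.Ico (-(N:ℤ)) (N:ℤ), (z j) ^ k‖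
        ≤ C * ((2*N:ℕ):ℝ) ^ (D - 1) := by
      rw [norm_prod, ← Finset.prod_erase_mul _ _ (Finset.mem_univ j0)]
      have h1 : ∀ j, ‖∑ k ∈ Finset.Ico (-(N:ℤ)) (N:ℤ), (z j) ^ k‖ ≤ ((2*N:ℕ):ℝ) := by
        intro j
        calc ‖∑ k ∈ Finset.Ico (-(N:ℤ)) (N:ℤ), (z j) ^ k‖
            ≤ ∑ k ∈ Finset.Ico (-(N:ℤ)) (N:ℤ), ‖(z j) ^ k‖ := norm_sum_le _ _
          _ = ((2*N:ℕ):ℝ) := by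
              rw [Finset.sum_congr rfl (fun k _ => by rw [norm_zpow, hznorm j, one_zpow]),
                Finset.sum_const, card_Ico_NN]
              simp
      calc (∏ j ∈ Finset.univ.erase j0, ‖∑ k ∈ Finset.Ico (-(N:ℤ)) (N:ℤ), (z j) ^ k‖)
            * ‖∑ k ∈ Finset.Ico (-(N:ℤ)) (N:ℤ), (z j0) ^ k‖
          ≤ (∏ _j ∈ Finset.univ.erase j0, ((2*N:ℕ):ℝ)) * C := by
            refine mul_le_mul ?_ (norm_geom_bound _ (hznorm j0) hj0 N) (norm_nonneg _) ?_
            · exact Finset.prod_le_prod (fun j _ => norm_nonneg _) (fun j _ => h1 j)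
            · exact Finset.prod_nonneg fun j _ => by positivity
        _ = C * ((2*N:ℕ):ℝ) ^ (D - 1) := by
            rw [Finset.prod_const, mul_comm]
            congr 2
            rw [Finset.card_erase_of_mem (Finset.mem_univ j0), Finset.card_univ,
              Fintype.card_fin]
    calc ‖∏ j, ∑ k ∈ Finset.Ico (-(N:ℤ)) (N:ℤ), (z j) ^ k‖ / ((2*N:ℕ):ℝ) ^ D
        ≤ (C * ((2*N:ℕ):ℝ) ^ (D - 1)) / ((2*N:ℕ):ℝ) ^ D := by gcongr
      _ = C / ((2*N:ℕ):ℝ) := by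
          have hx : (((2*N:ℕ):ℝ)) ^ (D-1) ≠ 0 := by positivity
          have hsplit : (((2*N:ℕ):ℝ)) ^ D = (((2*N:ℕ):ℝ)) * (((2*N:ℕ):ℝ)) ^ (D-1) := by
            rw [← pow_succ']; congr 1; omega
          rw [hsplit, mul_div_mul_right _ _ hx]
  -- squeeze
  refine squeeze_zero_norm' (a := fun N : ℕ => C / ((2*N:ℕ):ℝ)) ?_ ?_
  · filter_upwards [eventually_ge_atTop 1] with N hN using hbound N hN
  · have h2 : Tendsto (fun N : ℕ => ((2*N:ℕ):ℝ)) atTop atTop := by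
      refine tendsto_natCast_atTop_atTop.comp ?_
      exact tendsto_atTop_mono (fun n => by simp only [id_eq]; omega) tendsto_id
    exact Tendsto.div_atTop tendsto_const_nhds h2

/-- tchar as a continuous map. -/
def tcharCM (m : Fin K → ℤ) : C(Torus K, ℂ) := ⟨tchar m, tchar_continuous m⟩

lemma tchar_zero_apply (x : Torus K) : tchar (0 : Fin K → ℤ) x = 1 := by
  show (∏ j, fourier ((0 : Fin K → ℤ) j) (x j)) = 1
  exact Finset.prod_eq_one fun j _ => by rw [Pi.zero_apply]; exact fourier_zero

lemma cmap_integrable (f : C(Torus K, ℂ)) : Integrable f (volume : Measure (Torus K)) :=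
  f.continuous.integrable_of_hasCompactSupport (IsClosed.isCompact (isClosed_tsupport _))

lemma cmap_integrableR (f : C(Torus K, ℝ)) : Integrable f (volume : Measure (Torus K)) :=
  f.continuous.integrable_of_hasCompactSupport (IsClosed.isCompact (isClosed_tsupport _))

variable (τ : Zd D →+ Torus K)

lemma birkC_sub (f g : Torus K → ℂ) (t : Torus K) (N : ℕ) :
    birkC τ f t N - birkC τ g t N = birkC τ (f - g) t N := by
  simp only [birkC, Pi.sub_apply, Finset.sum_sub_distrib, sub_div]

lemma norm_birkC_le (f : C(Torus K, ℂ)) (t : Torus K) {N : ℕ} (hN : 1 ≤ N) :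
    ‖birkC τ f t N‖ ≤ ‖f‖ := by
  rw [birkC, norm_div, norm_pow, Complex.norm_natCast]
  have h2N : (0:ℝ) < ((2*N:ℕ):ℝ) ^ D := by positivity
  rw [div_le_iff₀ h2N]
  calc ‖∑ ℓ ∈ box D N, f (t + τ ℓ)‖ ≤ ∑ ℓ ∈ box D N, ‖f (t + τ ℓ)‖ := norm_sum_le _ _
    _ ≤ ∑ _ℓ ∈ box D N, ‖f‖ :=
      Finset.sum_le_sum fun ℓ _ => f.norm_coe_le_norm _
    _ = ‖f‖ * ((2*N:ℕ):ℝ) ^ D := by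
      rw [Finset.sum_const, card_box, nsmul_eq_mul, mul_comm]
      push_cast
      ring

lemma tendsto_birkC_char (hdense : DenseRange τ) (hD : 1 ≤ D) (m : Fin K → ℤ) (t : Torus K) :
    Tendsto (birkC τ (tchar m) t) atTop (𝓝 (∫ x : Torus K, tchar m x)) := by
  by_cases hm : m = 0
  · subst hm
    have hint : ∫ x : Torus K, tchar (0 : Fin K → ℤ) x = 1 := by
      rw [integral_congr_ae (Filter.Eventually.of_forall tchar_zero_apply)]
      simp
    rw [hint]
    have hev : ∀ᶠ N in atTop, birkC τ (tchar (0 : Fin K → ℤ)) t N = 1 := by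
      filter_upwards [eventually_ge_atTop 1] with N hN
      rw [birkC]
      rw [Finset.sum_congr rfl fun ℓ _ => tchar_zero_apply _, Finset.sum_const, card_box]
      have h0 : (2*N:ℕ) ≠ 0 := by omega
      have hne : (((2*N:ℕ):ℂ)) ^ D ≠ 0 := pow_ne_zero _ (Nat.cast_ne_zero.mpr h0)
      rw [nsmul_eq_mul, mul_one]
      push_cast at hne ⊢
      rw [div_self hne]
    exact Tendsto.congr' (by filter_upwards [hev] with N h using h.symm) tendsto_const_nhds
  · rw [integral_tchar m hm]
    exact tendsto_birkC_tchar τ hdense hD m hm t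

/-- The span of the characters. -/
def charSpan (K : ℕ) : Submodule ℂ C(Torus K, ℂ) :=
  Submodule.span ℂ (Set.range (tcharCM (K := K)))

lemma one_mem_charSpan : (1 : C(Torus K, ℂ)) ∈ charSpan K := by
  have : (1 : C(Torus K, ℂ)) = tcharCM 0 := ContinuousMap.ext fun x => (tchar_zero_apply x).symm
  rw [this]
  exact Submodule.subset_span ⟨0, rfl⟩

lemma mul_mem_charSpan {f g : C(Torus K, ℂ)} (hf : f ∈ charSpan K) (hg : g ∈ charSpan K) :
    f * g ∈ charSpan K := by
  have h1 : f * g ∈ charSpan K * charSpan K := Submodule.mul_mem_mul hf hg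
  have h2 : charSpan K * charSpan K ≤ charSpan K := by
    rw [charSpan, Submodule.span_mul_span]
    refine Submodule.span_le.mpr ?_
    rintro _ ⟨a, ⟨ma, rfl⟩, b, ⟨mb, rfl⟩, rfl⟩
    refine Submodule.subset_span ⟨ma + mb, ?_⟩
    refine ContinuousMap.ext fun x => ?_
    exact (tchar_mul ma mb x).symm
  exact h2 h1

lemma star_mem_charSpan {f : C(Torus K, ℂ)} (hf : f ∈ charSpan K) : star f ∈ charSpan K := by
  induction hf using Submodule.span_induction with
  | mem g hg =>
      obtain ⟨m, rfl⟩ := hg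
      have : star (tcharCM m) = tcharCM (-m) := by
        refine ContinuousMap.ext fun x => ?_
        show (starRingEnd ℂ) (tchar m x) = tchar (-m) x
        exact tchar_conj m x
      rw [this]
      exact Submodule.subset_span ⟨-m, rfl⟩
  | zero => rw [star_zero]; exact Submodule.zero_mem _
  | add x y _ _ hx hy => rw [star_add]; exact Submodule.add_mem _ hx hy
  | smul c x _ hx => rw [star_smul]; exact Submodule.smul_mem _ _ hx

lemma mem_closure_charSpan (f : C(Torus K, ℂ)) :
    f ∈ closure (charSpan K : Set C(Torus K, ℂ)) := by
  set A : StarSubalgebra ℂ C(Torus K, ℂ) := StarAlgebra.adjoin ℂ (Set.range (tcharCM (K := K)))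
  have hsep : A.SeparatesPoints := by
    intro x y hxy
    obtain ⟨j, hj⟩ : ∃ j, x j ≠ y j := by
      by_contra h; push_neg at h; exact hxy (funext h)
    refine ⟨_, ⟨tcharCM (Pi.single j 1), ?_, rfl⟩, ?_⟩
    · exact StarAlgebra.subset_adjoin ℂ _ ⟨Pi.single j 1, rfl⟩
    · have hval : ∀ u : Torus K, tcharCM (Pi.single j 1) u = AddCircle.toCircle (u j) := by
        intro u
        show (∏ i, fourier ((Pi.single j 1 : Fin K → ℤ) i) (u i)) = _
        rw [Finset.prod_eq_single j]
        · rw [Pi.single_eq_same, fourier_one]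
        · intro i _ hij
          rw [Pi.single_eq_of_ne hij, fourier_zero]
        · intro h; exact absurd (Finset.mem_univ j) h
      show tcharCM (Pi.single j 1) x ≠ tcharCM (Pi.single j 1) y
      rw [hval x, hval y]
      intro h
      exact hj (AddCircle.injective_toCircle one_ne_zero (Subtype.coe_injective h))
  have htop : A.topologicalClosure = ⊤ :=
    ContinuousMap.starSubalgebra_topologicalClosure_eq_top_of_separatesPoints A hsep
  have hAV : (A : Set C(Torus K, ℂ)) ⊆ (charSpan K : Set C(Torus K, ℂ)) := by
    intro g hg
    induction hg using StarAlgebra.adjoin_induction with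
    | mem g hg => exact Submodule.subset_span hg
    | algebraMap c =>
        rw [Algebra.algebraMap_eq_smul_one]
        exact Submodule.smul_mem _ _ one_mem_charSpan
    | add x y _ _ hx hy => exact Submodule.add_mem _ hx hy
    | mul x y _ _ hx hy => exact mul_mem_charSpan hx hy
    | star x _ hx => exact star_mem_charSpan hx
  have hf : f ∈ closure (A : Set C(Torus K, ℂ)) := by
    have : f ∈ (A.topologicalClosure : Set C(Torus K, ℂ)) := by rw [htop]; trivial
    exact this
  exact closure_mono hAV hf

lemma tendsto_birkC_spanMem (hdense : DenseRange τ) (hD : 1 ≤ D) (t : Torus K)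
    {f : C(Torus K, ℂ)} (hf : f ∈ charSpan K) :
    Tendsto (birkC τ f t) atTop (𝓝 (∫ x : Torus K, f x)) := by
  induction hf using Submodule.span_induction with
  | mem g hg =>
      obtain ⟨m, rfl⟩ := hg
      exact tendsto_birkC_char τ hdense hD m t
  | zero =>
      have : ∀ N, birkC τ (⇑(0 : C(Torus K, ℂ))) t N = 0 := by
        intro N; simp [birkC]
      rw [funext this]
      simpa using tendsto_const_nhds
  | add x y hxm hym hx hy =>
      have hadd : ∀ N, birkC τ (⇑(x + y)) t N = birkC τ x t N + birkC τ y t N := by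
        intro N; simp [birkC, Finset.sum_add_distrib, add_div]
      rw [funext hadd]
      have hint : ∫ u : Torus K, (x + y) u = (∫ u : Torus K, x u) + ∫ u : Torus K, y u := by
        simp only [ContinuousMap.add_apply]
        exact integral_add (cmap_integrable x) (cmap_integrable y)
      rw [hint]
      exact Tendsto.add hx hy
  | smul c x hxm hx =>
      have hsmul : ∀ N, birkC τ (⇑(c • x)) t N = c * birkC τ x t N := by
        intro N
        simp only [birkC, ContinuousMap.coe_smul, Pi.smul_apply, smul_eq_mul,
          ← Finset.mul_sum, mul_div_assoc]
      rw [funext hsmul]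
      have hint : ∫ u : Torus K, (c • x) u = c * ∫ u : Torus K, x u := by
        simp only [ContinuousMap.smul_apply, smul_eq_mul]
        exact integral_const_mul c _
      rw [hint]
      exact Tendsto.const_mul c hx

/-- Birkhoff averages of any continuous function converge to its integral. -/
lemma tendsto_birkC (hdense : DenseRange τ) (hD : 1 ≤ D) (t : Torus K) (f : C(Torus K, ℂ)) :
    Tendsto (birkC τ f t) atTop (𝓝 (∫ x : Torus K, f x)) := by
  rw [Metric.tendsto_atTop]
  intro ε hε
  obtain ⟨g, hgV, hgf⟩ : ∃ g ∈ charSpan K, dist f g < ε / 3 := by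
    have := Metric.mem_closure_iff.mp (mem_closure_charSpan f) (ε / 3) (by linarith)
    obtain ⟨g, hg, hd⟩ := this
    exact ⟨g, hg, hd⟩
  have hgt := tendsto_birkC_spanMem τ hdense hD t hgV
  rw [Metric.tendsto_atTop] at hgt
  obtain ⟨N0, hN0⟩ := hgt (ε / 3) (by linarith)
  refine ⟨max N0 1, fun n hn => ?_⟩
  have hn0 : N0 ≤ n := le_trans (le_max_left _ _) hn
  have hn1 : 1 ≤ n := le_trans (le_max_right _ _) hn
  have h1 : dist (birkC τ f t n) (birkC τ g t n) ≤ ε / 3 := by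
    rw [dist_eq_norm, birkC_sub]
    calc ‖birkC τ (⇑f - ⇑g) t n‖ = ‖birkC τ (⇑(f - g)) t n‖ := by rw [ContinuousMap.coe_sub]
      _ ≤ ‖f - g‖ := norm_birkC_le τ (f - g) t hn1
      _ ≤ ε / 3 := by rw [← dist_eq_norm] at *; exact le_of_lt hgf
  have h2 : dist (∫ x : Torus K, g x) (∫ x : Torus K, f x) ≤ ε / 3 := by
    rw [dist_eq_norm, ← integral_sub (cmap_integrable g) (cmap_integrable f)]
    calc ‖∫ x : Torus K, (g x - f x)‖
        ≤ ‖g - f‖ * (volume (Set.univ : Set (Torus K))).toReal :=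
          norm_integral_le_of_norm_le_const
            (ae_of_all _ fun x => by simpa using (g - f).norm_coe_le_norm x)
      _ = ‖g - f‖ := by simp
      _ ≤ ε / 3 := by
          have hh : ‖g - f‖ = dist g f := (dist_eq_norm g f).symm
          rw [hh, dist_comm]
          exact le_of_lt hgf
  calc dist (birkC τ f t n) (∫ x : Torus K, f x)
      ≤ dist (birkC τ f t n) (birkC τ g t n) + dist (birkC τ g t n) (∫ x : Torus K, f x) :=
        dist_triangle _ _ _
    _ ≤ ε / 3 + (dist (birkC τ g t n) (∫ x : Torus K, g x)
          + dist (∫ x : Torus K, g x) (∫ x : Torus K, f x)) := by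
        refine add_le_add h1 (dist_triangle _ _ _)
    _ < ε / 3 + (ε / 3 + ε / 3) := by
        have := hN0 n hn0
        have h2' := h2
        linarith
    _ = ε := by ring

/-- Birkhoff average along boxes (real valued). -/
def birkR (τ : Zd D →+ Torus K) (f : Torus K → ℝ) (t : Torus K) (N : ℕ) : ℝ :=
  (∑ ℓ ∈ box D N, f (t + τ ℓ)) / (((2 * N : ℕ) : ℝ)) ^ D

lemma tendsto_birkR (hdense : DenseRange τ) (hD : 1 ≤ D) (t : Torus K) (f : C(Torus K, ℝ)) :
    Tendsto (birkR τ f t) atTop (𝓝 (∫ x : Torus K, f x)) := by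
  set F : C(Torus K, ℂ) := ⟨fun x => ((f x : ℝ) : ℂ), Complex.continuous_ofReal.comp f.continuous⟩
    with hF
  have h1 := tendsto_birkC τ hdense hD t F
  have h2 : ∀ N, birkC τ F t N = ((birkR τ f t N : ℝ) : ℂ) := by
    intro N
    rw [birkC, birkR]
    push_cast
    rfl
  have h3 : ∫ x : Torus K, F x = ((∫ x : Torus K, f x : ℝ) : ℂ) := by
    rw [hF]
    exact integral_ofReal
  rw [funext h2, h3] at h1
  have := (Complex.continuous_re.tendsto _).comp h1
  simpa [Function.comp_def] using this

open Classical in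
lemma tendsto_birk_indicator (hdense : DenseRange τ) (hD : 1 ≤ D) (t : Torus K)
    {E : Set (Torus K)} (hEo : IsOpen E) (hEcl : volume (closure E) = volume E) :
    Tendsto (fun N => (∑ ℓ ∈ box D N, (if t + τ ℓ ∈ E then (1:ℝ) else 0)) / (((2*N:ℕ):ℝ)) ^ D)
      atTop (𝓝 (volume E).toReal) := by
  rw [Metric.tendsto_atTop]
  intro ε hε
  set ε4 : ℝ := ε / 4 with hε4
  have hε4pos : 0 < ε4 := by positivity
  have hElt : volume E ≠ ⊤ := (measure_lt_top _ _).ne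
  -- inner approximation by a compact set
  obtain ⟨C, hCE, hCcomp, hCvol⟩ :=
    (MeasureTheory.Measure.Regular.innerRegular (μ := (volume : Measure (Torus K)))).exists_subset_lt_add
      isCompact_empty hEo hElt (by positivity : ENNReal.ofReal ε4 ≠ 0)
  -- outer approximation of the closure by an open set
  obtain ⟨U, hEU, hUo, hUvol⟩ :=
    Set.exists_isOpen_lt_add (μ := (volume : Measure (Torus K))) (closure E)
      (measure_lt_top _ _).ne (by positivity : ENNReal.ofReal ε4 ≠ 0)
  -- Urysohn functions
  obtain ⟨g, hg0, hg1, hg01⟩ := exists_continuous_zero_one_of_isCompact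
      (IsClosed.isCompact hEo.isClosed_compl) (hCcomp.isClosed) (by
        rw [Set.disjoint_compl_left_iff_subset]; exact hCE)
  obtain ⟨h, hh0, hh1, hh01⟩ := exists_continuous_zero_one_of_isCompact
      (hUo.isClosed_compl.isCompact) isClosed_closure (by
        rw [Set.disjoint_compl_left_iff_subset]; exact hEU)
  -- integral bounds
  have hgint : (volume C).toReal ≤ ∫ x : Torus K, g x := by
    have hmono : ∀ x, C.indicator (fun _ => (1:ℝ)) x ≤ g x := by
      intro x
      by_cases hx : x ∈ C
      · rw [Set.indicator_of_mem hx]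
        exact le_of_eq (hg1 hx).symm
      · rw [Set.indicator_of_notMem hx]
        exact (hg01 x).1
    calc (volume C).toReal = ∫ x : Torus K, C.indicator (fun _ => (1:ℝ)) x := by
          rw [integral_indicator_const (1:ℝ) hCcomp.measurableSet]; simp; rfl
      _ ≤ ∫ x : Torus K, g x :=
          integral_mono ((integrable_const (1:ℝ)).indicator hCcomp.measurableSet)
            (cmap_integrableR g) hmono
  have hhint : ∫ x : Torus K, h x ≤ (volume U).toReal := by
    have hmono : ∀ x, h x ≤ U.indicator (fun _ => (1:ℝ)) x := by
      intro x
      by_cases hx : x ∈ U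
      · rw [Set.indicator_of_mem hx]
        exact (hh01 x).2
      · rw [Set.indicator_of_notMem hx]
        exact le_of_eq (hh0 hx)
    calc ∫ x : Torus K, h x ≤ ∫ x : Torus K, U.indicator (fun _ => (1:ℝ)) x :=
          integral_mono (cmap_integrableR h)
            ((integrable_const (1:ℝ)).indicator hUo.measurableSet) hmono
      _ = (volume U).toReal := by
          rw [integral_indicator_const (1:ℝ) hUo.measurableSet]; simp; rfl
  -- real inequalities
  set a : ℝ := (volume E).toReal with ha
  have hCr : a - ε4 ≤ (volume C).toReal := by
    have h1 : volume E ≤ volume C + ENNReal.ofReal ε4 := hCvol.le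
    have h2 : (volume E).toReal ≤ ((volume C) + ENNReal.ofReal ε4).toReal :=
      ENNReal.toReal_mono (by finiteness) h1
    rw [ENNReal.toReal_add (by finiteness) (by finiteness)] at h2
    rw [ENNReal.toReal_ofReal hε4pos.le] at h2
    linarith
  have hUr : (volume U).toReal ≤ a + ε4 := by
    have h1 : volume U ≤ volume E + ENNReal.ofReal ε4 := by
      rw [← hEcl]; exact hUvol.le
    have h2 : (volume U).toReal ≤ ((volume E) + ENNReal.ofReal ε4).toReal :=
      ENNReal.toReal_mono (by finiteness) h1
    rw [ENNReal.toReal_add (by finiteness) (by finiteness),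
      ENNReal.toReal_ofReal hε4pos.le] at h2
    linarith
  -- limits of the Urysohn averages
  have hgT := tendsto_birkR τ hdense hD t g
  have hhT := tendsto_birkR τ hdense hD t h
  rw [Metric.tendsto_atTop] at hgT hhT
  obtain ⟨N1, hN1⟩ := hgT ε4 hε4pos
  obtain ⟨N2, hN2⟩ := hhT ε4 hε4pos
  refine ⟨max (max N1 N2) 1, fun n hn => ?_⟩
  have hn1 : N1 ≤ n := le_trans (le_trans (le_max_left _ _) (le_max_left _ _)) hn
  have hn2 : N2 ≤ n := le_trans (le_trans (le_max_right _ _) (le_max_left _ _)) hn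
  have hnpos : 1 ≤ n := le_trans (le_max_right _ _) hn
  have hden : (0:ℝ) < (((2*n:ℕ):ℝ)) ^ D := by
    have : (0:ℝ) < ((2*n:ℕ):ℝ) := by positivity
    positivity
  set S : ℝ := (∑ ℓ ∈ box D n, (if t + τ ℓ ∈ E then (1:ℝ) else 0)) / (((2*n:ℕ):ℝ)) ^ D with hS
  have hlow : birkR τ g t n ≤ S := by
    rw [birkR, hS, div_le_div_iff_of_pos_right hden]
    refine Finset.sum_le_sum fun ℓ _ => ?_
    by_cases hx : t + τ ℓ ∈ E
    · rw [if_pos hx]; exact (hg01 _).2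
    · rw [if_neg hx]; exact le_of_eq (hg0 hx)
  have hhigh : S ≤ birkR τ h t n := by
    rw [birkR, hS, div_le_div_iff_of_pos_right hden]
    refine Finset.sum_le_sum fun ℓ _ => ?_
    by_cases hx : t + τ ℓ ∈ E
    · rw [if_pos hx]; exact le_of_eq (hh1 (subset_closure hx)).symm
    · rw [if_neg hx]; exact (hh01 _).1
  have hgn := hN1 n hn1
  have hhn := hN2 n hn2
  rw [Real.dist_eq] at hgn hhn ⊢
  rw [abs_lt] at hgn hhn ⊢
  constructor
  · have := hgn.2
    linarith [hlow, hgint, hCr]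
  · have := hhn.1
    linarith [hhigh, hhint, hUr]

lemma label_unique {P : A → Set (Torus K)} (hdisj : Pairwise (Function.onFun Disjoint P))
    {x : Torus K} {a b : A} (ha : x ∈ P a) (hb : x ∈ P b) : a = b := by
  by_contra hab
  exact (hdisj hab).le_bot ⟨ha, hb⟩

theorem dSym_eq_two_mul_dB {K D : ℕ} (hK : 1 ≤ K) (hD : 1 ≤ D) {A : Type*} [Fintype A]
    (τ : Zd D →+ Torus K) (hinj : Function.Injective τ) (hdense : DenseRange τ)
    (P Q : A → Set (Torus K)) (hP : IsOpenPartition P) (hQ : IsOpenPartition Q)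
    (labP labQ : Torus K → A) (hlabP : IsLabel P labP) (hlabQ : IsLabel Q labQ)
    (t : Torus K) (ht : t ∈ Ttil τ P ∩ Ttil τ Q) :
    (∃ c : ℝ, Filter.Tendsto
        (densSeq D {ℓ : Zd D | traj τ labP t ℓ ≠ traj τ labQ t ℓ}) Filter.atTop (nhds c)) ∧
    dSym P Q = 2 * dB D (traj τ labP t) (traj τ labQ t) := by
  classical
  obtain ⟨htP, htQ⟩ := ht
  set E : Set (Torus K) := ⋃ (p : A × A), ⋃ (_ : p.1 ≠ p.2), P p.1 ∩ Q p.2 with hE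
  set F : Set (Torus K) := ⋃ a, P a ∩ Q a with hF
  have hEo : IsOpen E :=
    isOpen_iUnion fun p => isOpen_iUnion fun _ => (hP.isOpen _).inter (hQ.isOpen _)
  have hFo : IsOpen F := isOpen_iUnion fun a => (hP.isOpen _).inter (hQ.isOpen _)
  have hEm : MeasurableSet E := hEo.measurableSet
  have hFm : MeasurableSet F := hFo.measurableSet
  have hPm : MeasurableSet (⋃ a, P a) := (isOpen_iUnion fun a => hP.isOpen a).measurableSet
  have hQm : MeasurableSet (⋃ a, Q a) := (isOpen_iUnion fun a => hQ.isOpen a).measurableSet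
  have hQnull : volume (⋃ a, Q a)ᶜ = 0 := by
    rw [measure_compl hQm (measure_lt_top _ _).ne, hQ.full, measure_univ, tsub_self]
  have hEFdisj : Disjoint E F := by
    rw [Set.disjoint_left]
    intro x hxE hxF
    simp only [hE, hF, Set.mem_iUnion] at hxE hxF
    obtain ⟨p, hab, hxa, hxb⟩ := hxE
    obtain ⟨c, hxc, hxc'⟩ := hxF
    exact hab (by rw [label_unique hP.disj hxa hxc, label_unique hQ.disj hxb hxc'])
  have hEuF : E ∪ F = (⋃ a, P a) ∩ (⋃ a, Q a) := by
    apply Set.Subset.antisymm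
    · rintro x (hx | hx)
      · simp only [hE, Set.mem_iUnion] at hx
        obtain ⟨p, _, hxa, hxb⟩ := hx
        exact ⟨Set.mem_iUnion.mpr ⟨p.1, hxa⟩, Set.mem_iUnion.mpr ⟨p.2, hxb⟩⟩
      · simp only [hF, Set.mem_iUnion] at hx
        obtain ⟨a, hxa, hxb⟩ := hx
        exact ⟨Set.mem_iUnion.mpr ⟨a, hxa⟩, Set.mem_iUnion.mpr ⟨a, hxb⟩⟩
    · rintro x ⟨hxP, hxQ⟩
      obtain ⟨a, hxa⟩ := Set.mem_iUnion.mp hxP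
      obtain ⟨b, hxb⟩ := Set.mem_iUnion.mp hxQ
      by_cases hab : a = b
      · exact Or.inr (Set.mem_iUnion.mpr ⟨a, hxa, hab ▸ hxb⟩)
      · exact Or.inl (by
          simp only [hE, Set.mem_iUnion]
          exact ⟨(a, b), hab, hxa, hxb⟩)
  have hfull : volume (E ∪ F) = 1 := by
    rw [hEuF, measure_inter_conull hQnull, hP.full]
  have hsum : volume E + volume F = 1 := by
    rw [← measure_union hEFdisj hFm, hfull]
  have hEcl : volume (closure E) = volume E := by
    refine le_antisymm ?_ (measure_mono subset_closure)
    have h1 : closure E ⊆ Fᶜ := (hEFdisj.closure_left hFo).subset_compl_right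
    calc volume (closure E) ≤ volume Fᶜ := measure_mono h1
      _ = 1 - volume F := by
          rw [measure_compl hFm (measure_lt_top _ _).ne, measure_univ]
      _ = volume E := by
          rw [← hsum, ENNReal.add_sub_cancel_right (measure_lt_top _ _).ne]
  -- membership of trajectory points
  have hmemP : ∀ ℓ : Zd D, t + τ ℓ ∈ ⋃ a, P a := by
    intro ℓ
    obtain ⟨s, hs, hst⟩ := Set.mem_iInter.mp htP (-ℓ)
    have heq : t + τ ℓ = s := by
      rw [← hst]
      show s + τ (-ℓ) + τ ℓ = s
      rw [map_neg, add_assoc, neg_add_cancel, add_zero]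
    rw [heq]; exact hs
  have hmemQ : ∀ ℓ : Zd D, t + τ ℓ ∈ ⋃ a, Q a := by
    intro ℓ
    obtain ⟨s, hs, hst⟩ := Set.mem_iInter.mp htQ (-ℓ)
    have heq : t + τ ℓ = s := by
      rw [← hst]
      show s + τ (-ℓ) + τ ℓ = s
      rw [map_neg, add_assoc, neg_add_cancel, add_zero]
    rw [heq]; exact hs
  -- the disagreement set
  have hJ : {ℓ : Zd D | traj τ labP t ℓ ≠ traj τ labQ t ℓ} = {ℓ : Zd D | t + τ ℓ ∈ E} := by
    ext ℓ
    obtain ⟨a, hxa⟩ := Set.mem_iUnion.mp (hmemP ℓ)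
    obtain ⟨b, hxb⟩ := Set.mem_iUnion.mp (hmemQ ℓ)
    have hPa : labP (t + τ ℓ) = a := hlabP a _ hxa
    have hQb : labQ (t + τ ℓ) = b := hlabQ b _ hxb
    simp only [Set.mem_setOf_eq, traj]
    constructor
    · intro hne
      simp only [hE, Set.mem_iUnion]
      exact ⟨(a, b), by rwa [hPa, hQb] at hne, hxa, hxb⟩
    · intro hxE
      simp only [hE, Set.mem_iUnion] at hxE
      obtain ⟨p, hne, hxa', hxb'⟩ := hxE
      rw [hPa, hQb]
      rw [label_unique hP.disj hxa hxa', label_unique hQ.disj hxb hxb']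
      exact hne
  -- convergence of the density sequence
  have hdens : ∀ N, densSeq D {ℓ : Zd D | t + τ ℓ ∈ E} N
      = (∑ ℓ ∈ box D N, (if t + τ ℓ ∈ E then (1:ℝ) else 0)) / (((2*N:ℕ):ℝ)) ^ D := by
    intro N
    rw [densSeq]
    congr 1
    rw [Finset.card_filter]
    push_cast
    refine Finset.sum_congr rfl fun ℓ _ => ?_
    by_cases hx : t + τ ℓ ∈ E <;> simp [hx]
  have hT : Tendsto (densSeq D {ℓ : Zd D | traj τ labP t ℓ ≠ traj τ labQ t ℓ}) atTop
      (𝓝 (volume E).toReal) := by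
    rw [hJ]
    exact (tendsto_birk_indicator τ hdense hD t hEo hEcl).congr fun N => (hdens N).symm
  refine ⟨⟨(volume E).toReal, hT⟩, ?_⟩
  -- measure identities
  have hEvol : volume E
      = ∑ p ∈ Finset.univ.filter (fun p : A × A => p.1 ≠ p.2), volume (P p.1 ∩ Q p.2) := by
    have hEeq : E = ⋃ p ∈ Finset.univ.filter (fun p : A × A => p.1 ≠ p.2), P p.1 ∩ Q p.2 := by
      ext x
      simp [hE, Finset.mem_filter]
    rw [hEeq, measure_biUnion_finset ?_ fun p _ => ((hP.isOpen _).inter (hQ.isOpen _)).measurableSet]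
    intro p hp q hq hpq
    have : p.1 ≠ q.1 ∨ p.2 ≠ q.2 := by
      by_contra hcon
      push_neg at hcon
      exact hpq (Prod.ext hcon.1 hcon.2)
    rcases this with h | h
    · exact ((hP.disj h).mono Set.inter_subset_left Set.inter_subset_left : _)
    · exact ((hQ.disj h).mono Set.inter_subset_right Set.inter_subset_right : _)
  have hPdiff : ∀ a, volume (P a \ Q a)
      = ∑ b ∈ Finset.univ.filter (fun b => a ≠ b), volume (P a ∩ Q b) := by
    intro a
    have h1 : volume (P a \ Q a) = volume ((P a \ Q a) ∩ (⋃ b, Q b)) :=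
      (measure_inter_conull hQnull).symm
    have h2 : (P a \ Q a) ∩ (⋃ b, Q b)
        = ⋃ b ∈ Finset.univ.filter (fun b => a ≠ b), P a ∩ Q b := by
      ext x
      simp only [Set.mem_inter_iff, Set.mem_diff, Set.mem_iUnion, Finset.mem_filter,
        Finset.mem_univ, true_and]
      constructor
      · rintro ⟨⟨hxa, hxna⟩, b, hxb⟩
        exact ⟨b, fun h => hxna (h ▸ hxb), hxa, hxb⟩
      · rintro ⟨b, hab, hxa, hxb⟩
        exact ⟨⟨hxa, fun hxQa => hab (label_unique hQ.disj hxQa hxb)⟩, ⟨b, hxb⟩⟩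
    rw [h1, h2, measure_biUnion_finset ?_ fun b _ => ((hP.isOpen _).inter (hQ.isOpen _)).measurableSet]
    intro b hb c hc hbc
    exact ((hQ.disj hbc).mono Set.inter_subset_right Set.inter_subset_right : _)
  have hQdiff : ∀ a, volume (Q a \ P a)
      = ∑ b ∈ Finset.univ.filter (fun b => a ≠ b), volume (P b ∩ Q a) := by
    intro a
    have hPnull : volume (⋃ b, P b)ᶜ = 0 := by
      rw [measure_compl hPm (measure_lt_top _ _).ne, hP.full, measure_univ, tsub_self]
    have h1 : volume (Q a \ P a) = volume ((Q a \ P a) ∩ (⋃ b, P b)) :=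
      (measure_inter_conull hPnull).symm
    have h2 : (Q a \ P a) ∩ (⋃ b, P b)
        = ⋃ b ∈ Finset.univ.filter (fun b => a ≠ b), P b ∩ Q a := by
      ext x
      simp only [Set.mem_inter_iff, Set.mem_diff, Set.mem_iUnion, Finset.mem_filter,
        Finset.mem_univ, true_and]
      constructor
      · rintro ⟨⟨hxa, hxna⟩, b, hxb⟩
        exact ⟨b, fun h => hxna (h ▸ hxb), hxb, hxa⟩
      · rintro ⟨b, hab, hxb, hxa⟩
        exact ⟨⟨hxa, fun hxPa => hab (label_unique hP.disj hxPa hxb)⟩, ⟨b, hxb⟩⟩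
    rw [h1, h2, measure_biUnion_finset ?_ fun b _ => ((hP.isOpen _).inter (hQ.isOpen _)).measurableSet]
    intro b hb c hc hbc
    exact ((hP.disj hbc).mono Set.inter_subset_left Set.inter_subset_left : _)
  have hsymm : ∀ a, volume (symmDiff (P a) (Q a))
      = volume (P a \ Q a) + volume (Q a \ P a) := by
    intro a
    rw [Set.symmDiff_def]
    exact measure_union (disjoint_sdiff_sdiff)
      ((hQ.isOpen a).measurableSet.diff (hP.isOpen a).measurableSet)
  have hsum1 : ∑ a, volume (P a \ Q a) = volume E := by
    rw [hEvol, Finset.sum_filter, Fintype.sum_prod_type]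
    exact Finset.sum_congr rfl fun a _ => by rw [hPdiff a, Finset.sum_filter]
  have hsum2 : ∑ a, volume (Q a \ P a) = volume E := by
    rw [hEvol, Finset.sum_filter, Fintype.sum_prod_type]
    rw [Finset.sum_congr rfl fun a (_ : a ∈ Finset.univ) => by rw [hQdiff a, Finset.sum_filter]]
    rw [Finset.sum_comm]
    refine Finset.sum_congr rfl fun a _ => Finset.sum_congr rfl fun b _ => ?_
    exact if_congr ne_comm rfl rfl
  have hdsym : dSym P Q = 2 * (volume E).toReal := by
    rw [dSym, ← ENNReal.toReal_sum (fun a _ => (measure_lt_top _ _).ne)]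
    rw [Finset.sum_congr rfl fun a _ => hsymm a, Finset.sum_add_distrib, hsum1, hsum2]
    rw [ENNReal.toReal_add (measure_lt_top _ _).ne (measure_lt_top _ _).ne]
    ring
  rw [hdsym, dB, upperDens, hT.limsup_eq]


end
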